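/- arXiv:1503.06762 — 2 statements merged into one kernel-verified Lean document; each statement's English description precedes it below -/
import Mathlib

section
/- Let p > 3 be a prime and k an algebraically closed (or arbitrary) field of characteristic p. The Witt algebra W with basis {e_n : -1 ≤ n ≤ p-2} and bracket [e_m, e_n] = (n-m)e_{m+n} is a simple Lie algebra: every nonzero Lie ideal of W equals W. -/
open scoped BigOperators

/-- The Witt bracket on coordinates with respect to the basis `e_{-1}, e_0, …, e_{p-2}`,
where the index `i : Fin p` encodes `n = i - 1`:  `[e_m, e_n] = (n - m) e_{m+n}`,
with `e_{m+n} := 0` if `m + n` lies outside `{-1, …, p-2}`. -/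
def wittBracket (p : ℕ) (k : Type*) [Field k] (x y : Fin p → k) : Fin p → k :=
  fun i => ∑ a : Fin p, ∑ b : Fin p,
    if (a : ℤ) + (b : ℤ) = (i : ℤ) + 1 then
      ((((b : ℤ) - (a : ℤ)) : ℤ) : k) * x a * y b
    else 0

/-- The basis vector `e_n` of the Witt algebra (zero if `n ∉ {-1, …, p-2}`). -/
def wittE (p : ℕ) (k : Type*) [Field k] (n : ℤ) : Fin p → k :=
  fun i => if (i : ℤ) = n + 1 then 1 else 0


section Aux
variable {p : ℕ} {k : Type*} [Field k]

lemma witt_bracket_ee (m n : ℤ) (hm : 0 ≤ m + 1) (hm' : m + 1 < (p:ℤ))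
    (hn : 0 ≤ n + 1) (hn' : n + 1 < (p:ℤ)) :
    wittBracket p k (wittE p k m) (wittE p k n)
      = ((n - m : ℤ) : k) • wittE p k (m + n) := by
  have hA : (m+1).toNat < p := by omega
  have hB : (n+1).toNat < p := by omega
  set A : Fin p := ⟨(m+1).toNat, hA⟩ with hAdef
  set B : Fin p := ⟨(n+1).toNat, hB⟩ with hBdef
  have hAv : (A : ℤ) = m + 1 := by simp [hAdef]; omega
  have hBv : (B : ℤ) = n + 1 := by simp [hBdef]; omega
  funext i
  simp only [wittBracket, Pi.smul_apply, smul_eq_mul]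
  rw [Finset.sum_eq_single A]
  · rw [Finset.sum_eq_single B]
    · simp only [wittE, hAv, hBv, if_pos rfl, mul_one]
      by_cases h : (i : ℤ) = m + n + 1
      · rw [if_pos (by omega), if_pos (by omega : (i:ℤ) = (m + n) + 1), mul_one]
        push_cast; ring
      · rw [if_neg (by omega), if_neg (by omega : ¬ (i:ℤ) = (m + n) + 1), mul_zero]
    · intro b _ hbB
      have hb : ¬ ((b : ℤ) = n + 1) := fun h => hbB (Fin.ext (by omega))
      simp [wittE, hb]
    · intro h; exact absurd (Finset.mem_univ _) h
  · intro a _ haA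
    have ha : ¬ ((a : ℤ) = m + 1) := fun h => haA (Fin.ext (by omega))
    apply Finset.sum_eq_zero
    intro b _
    simp [wittE, ha]
  · intro h; exact absurd (Finset.mem_univ _) h

lemma witt_bracket_e0 (hp : 1 < p) (y : Fin p → k) :
    wittBracket p k (wittE p k 0) y = fun i : Fin p => (((i:ℕ):k) - 1) * y i := by
  set A : Fin p := ⟨1, hp⟩ with hAdef
  have hAv : (A : ℤ) = 1 := by simp [hAdef]
  funext i
  simp only [wittBracket]
  rw [Finset.sum_eq_single A]
  · rw [Finset.sum_eq_single i]
    · rw [if_pos (by omega : (A : ℤ) + (i : ℤ) = (i:ℤ) + 1)]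
      have h1 : wittE p k 0 A = 1 := by simp only [wittE]; rw [if_pos (by omega : (A:ℤ) = 0 + 1)]
      rw [h1, mul_one]
      push_cast; ring
    · intro b _ hbi
      have hb : ¬ ((A : ℤ) + (b : ℤ) = (i : ℤ) + 1) := fun h => hbi (Fin.ext (by omega))
      rw [if_neg hb]
    · intro h; exact absurd (Finset.mem_univ _) h
  · intro a _ haA
    have ha : ¬ ((a : ℤ) = 0 + 1) := fun h => haA (Fin.ext (by omega))
    have h0 : wittE p k 0 a = 0 := by simp only [wittE]; rw [if_neg ha]
    apply Finset.sum_eq_zero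
    intro b _
    by_cases hcond : (a : ℤ) + (b : ℤ) = (i : ℤ) + 1
    · rw [if_pos hcond, h0, mul_zero, zero_mul]
    · rw [if_neg hcond]
  · intro h; exact absurd (Finset.mem_univ _) h

end Aux

section CharPAux
variable {p : ℕ} {k : Type*} [Field k] [CharP k p]

lemma witt_castk_inj {i j : Fin p} (h : ((i:ℕ):k) = ((j:ℕ):k)) : i = j := by
  have h2 := (CharP.natCast_eq_natCast k p).mp h
  have h3 : (i:ℕ) % p = (j:ℕ) % p := h2
  rw [Nat.mod_eq_of_lt i.isLt, Nat.mod_eq_of_lt j.isLt] at h3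
  exact Fin.ext h3

lemma witt_intCast_ne_zero {t : ℤ} (h0 : t ≠ 0) (h1 : -(p:ℤ) < t) (h2 : t < p) :
    ((t : ℤ) : k) ≠ 0 := by
  intro h
  have hdvd : (p:ℤ) ∣ t := (CharP.intCast_eq_zero_iff k p t).mp h
  have hle := Int.le_of_dvd (abs_pos.mpr h0) ((dvd_abs _ _).mpr hdvd)
  have := abs_lt.mpr ⟨h1, h2⟩
  omega

end CharPAux

section IdealAux
variable {p : ℕ} {k : Type*} [Field k]

lemma witt_step_mem (hp : 1 < p) (I : Submodule k (Fin p → k))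
    (hI : ∀ x y : Fin p → k, y ∈ I → wittBracket p k x y ∈ I) (c : k)
    (z : Fin p → k) (hz : z ∈ I) :
    (fun i : Fin p => ((((i:ℕ):k) - 1) - c) * z i) ∈ I := by
  have h1 := hI (wittE p k 0) z hz
  rw [witt_bracket_e0 hp] at h1
  have h2 := I.sub_mem h1 (I.smul_mem c hz)
  convert h2 using 1
  funext i
  simp only [Pi.sub_apply, Pi.smul_apply, smul_eq_mul]
  ring

lemma witt_prod_mem (hp : 1 < p) (I : Submodule k (Fin p → k))
    (hI : ∀ x y : Fin p → k, y ∈ I → wittBracket p k x y ∈ I)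
    (y : Fin p → k) (hy : y ∈ I) (S : Finset (Fin p)) :
    (fun i : Fin p => (∏ j ∈ S, (((i:ℕ):k) - ((j:ℕ):k))) * y i) ∈ I := by
  classical
  induction S using Finset.induction with
  | empty => simpa using hy
  | @insert j S hj ih =>
    have h := witt_step_mem hp I hI (((j:ℕ):k) - 1) _ ih
    convert h using 1
    funext i
    rw [Finset.prod_insert hj]
    ring

end IdealAux

/-- The Witt algebra over a field of characteristic `p > 3` is simple:
every nonzero Lie ideal is the whole algebra. -/
theorem witt_isSimple (p : ℕ) [Fact p.Prime] (hp : 3 < p) (k : Type*) [Field k] [CharP k p] :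
    ∀ I : Submodule k (Fin p → k),
      (∀ x y : Fin p → k, y ∈ I → wittBracket p k x y ∈ I) → I ≠ ⊥ → I = ⊤ := by
  intro I hI hne
  classical
  have hprime : p.Prime := Fact.out
  have hp5 : 5 ≤ p := by
    by_contra h
    have h4 : p = 4 := by omega
    rw [h4] at hprime
    norm_num at hprime
  have hp1 : 1 < p := by omega
  obtain ⟨y, hyI, hy0⟩ := (Submodule.ne_bot_iff I).mp hne
  obtain ⟨i0, hi0⟩ := Function.ne_iff.mp hy0
  have hi0' : y i0 ≠ 0 := hi0
  set S : Finset (Fin p) := Finset.univ.erase i0 with hS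
  have hz := witt_prod_mem hp1 I hI y hyI S
  set c : k := ∏ j ∈ S, (((i0:ℕ):k) - ((j:ℕ):k)) with hc
  have hcne : c ≠ 0 := by
    rw [hc]
    apply Finset.prod_ne_zero_iff.mpr
    intro j hj
    have hji : j ≠ i0 := Finset.ne_of_mem_erase hj
    exact sub_ne_zero.mpr (fun h => hji (witt_castk_inj h.symm))
  have hE0 : wittE p k (((i0:ℕ):ℤ) - 1) ∈ I := by
    have heq : wittE p k (((i0:ℕ):ℤ) - 1)
        = (c * y i0)⁻¹ • (fun i : Fin p => (∏ j ∈ S, (((i:ℕ):k) - ((j:ℕ):k))) * y i) := by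
      funext i
      rw [Pi.smul_apply, smul_eq_mul]
      by_cases h : i = i0
      · subst h
        have h1 : wittE p k (((i:ℕ):ℤ) - 1) i = 1 := by
          simp only [wittE]; rw [if_pos (by ring)]
        rw [h1, ← hc]
        exact (inv_mul_cancel₀ (mul_ne_zero hcne hi0')).symm
      · have h1 : wittE p k (((i0:ℕ):ℤ) - 1) i = 0 := by
          simp only [wittE]
          rw [if_neg (fun hcon => h (Fin.ext (by omega)))]
        have h2 : (∏ j ∈ S, (((i:ℕ):k) - ((j:ℕ):k))) = (0:k) :=
          Finset.prod_eq_zero (Finset.mem_erase.mpr ⟨h, Finset.mem_univ i⟩) (sub_self _)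
        rw [h1, h2, zero_mul, mul_zero]
    rw [heq]
    exact I.smul_mem _ hz
  have hdown : ∀ m : ℕ, m < p → wittE p k ((m:ℤ) - 1) ∈ I → wittE p k (-1) ∈ I := by
    intro m
    induction m with
    | zero => intro _ h; simpa using h
    | succ m ih =>
      intro hm h
      have h' : wittE p k (m:ℤ) ∈ I := by
        have harg : ((m+1:ℕ):ℤ) - 1 = (m:ℤ) := by push_cast; ring
        rwa [harg] at h
      have hb := hI (wittE p k (-1)) _ h'
      rw [witt_bracket_ee (-1) (m:ℤ) (by norm_num) (by omega) (by omega) (by omega)] at hb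
      have hs : (((m:ℤ) - (-1) : ℤ) : k) ≠ 0 :=
        witt_intCast_ne_zero (p := p) (by omega) (by omega) (by omega)
      have h2 := (Submodule.smul_mem_iff I hs).mp hb
      apply ih (by omega)
      have harg : (-1 + (m:ℤ)) = (m:ℤ) - 1 := by ring
      rwa [harg] at h2
  have h1E : wittE p k (-1) ∈ I := hdown (i0:ℕ) i0.isLt hE0
  have hup : ∀ m : ℕ, m < p → wittE p k ((m:ℤ) - 1) ∈ I := by
    intro m
    induction m with
    | zero => intro _; simpa using h1E
    | succ m ih =>
      intro hm
      have hgoal : ((m+1:ℕ):ℤ) - 1 = (m:ℤ) := by push_cast; ring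
      rw [hgoal]
      rcases m with _ | (_ | (_ | r))
      · -- e_0 via [e_1, e_{-1}]
        have hb := hI (wittE p k 1) _ h1E
        rw [witt_bracket_ee 1 (-1) (by omega) (by omega) (by omega) (by omega)] at hb
        have hs : ((-1 - 1 : ℤ) : k) ≠ 0 := witt_intCast_ne_zero (p := p) (by omega) (by omega) (by omega)
        have h2 := (Submodule.smul_mem_iff I hs).mp hb
        have harg : (1 + -1 : ℤ) = ((0:ℕ):ℤ) := by norm_num
        rwa [harg] at h2
      · -- e_1 via [e_2, e_{-1}]
        have hb := hI (wittE p k 2) _ h1E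
        rw [witt_bracket_ee 2 (-1) (by omega) (by omega) (by omega) (by omega)] at hb
        have hs : ((-1 - 2 : ℤ) : k) ≠ 0 := witt_intCast_ne_zero (p := p) (by omega) (by omega) (by omega)
        have h2 := (Submodule.smul_mem_iff I hs).mp hb
        have harg : (2 + -1 : ℤ) = ((1:ℕ):ℤ) := by norm_num
        rwa [harg] at h2
      · -- e_2 via [e_3, e_{-1}]
        have hb := hI (wittE p k 3) _ h1E
        rw [witt_bracket_ee 3 (-1) (by omega) (by omega) (by omega) (by omega)] at hb
        have hs : ((-1 - 3 : ℤ) : k) ≠ 0 := witt_intCast_ne_zero (p := p) (by omega) (by omega) (by omega)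
        have h2 := (Submodule.smul_mem_iff I hs).mp hb
        have harg : (3 + -1 : ℤ) = ((2:ℕ):ℤ) := by norm_num
        rwa [harg] at h2
      · -- e_{r+3} via [e_1, e_{r+2}]
        have hprev := ih (by omega)
        have harg : ((r+3:ℕ):ℤ) - 1 = (r:ℤ) + 2 := by push_cast; ring
        rw [harg] at hprev
        have hb := hI (wittE p k 1) _ hprev
        rw [witt_bracket_ee 1 ((r:ℤ)+2) (by omega) (by omega) (by omega) (by omega)] at hb
        have hs : (((r:ℤ) + 2 - 1 : ℤ) : k) ≠ 0 :=
          witt_intCast_ne_zero (p := p) (by omega) (by omega) (by omega)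
        have h2 := (Submodule.smul_mem_iff I hs).mp hb
        have harg2 : (1 + ((r:ℤ) + 2)) = ((r+3:ℕ):ℤ) := by push_cast; ring
        rwa [harg2] at h2
  rw [eq_top_iff]
  intro x _
  have hx : x = ∑ i : Fin p, x i • wittE p k (((i:ℕ):ℤ) - 1) := by
    funext j
    rw [Finset.sum_apply]
    rw [Finset.sum_eq_single j]
    · simp only [Pi.smul_apply, smul_eq_mul, wittE]
      rw [if_pos (by ring), mul_one]
    · intro i _ hij
      simp only [Pi.smul_apply, smul_eq_mul, wittE]
      rw [if_neg (fun h => hij (Fin.ext (by omega))), mul_zero]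
    · intro h; exact absurd (Finset.mem_univ _) h
  rw [hx]
  apply Submodule.sum_mem
  intro i _
  exact I.smul_mem _ (hup (i:ℕ) i.isLt)
end

section
/- In the Witt algebra W over a field of characteristic p ≥ 5, the elements e_{-1} and e_{p-2} generate W as a Lie algebra: the smallest Lie subalgebra of W containing e_{-1} and e_{p-2} is W itself. -/
open scoped BigOperators

lemma witt_brk (p : ℕ) (k : Type*) [Field k] [NeZero p] (j : Fin p) :
    wittBracket p k (Pi.single (0 : Fin p) 1) (Pi.single j 1)
      = fun i : Fin p => if (i : ℤ) + 1 = (j : ℤ) then ((j : ℤ) : k) else 0 := by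
  funext i
  unfold wittBracket
  rw [Finset.sum_eq_single (0 : Fin p)]
  · rw [Finset.sum_eq_single j]
    · simp only [Pi.single_eq_same, Fin.val_zero, Nat.cast_zero, zero_add, mul_one, sub_zero]
      by_cases h : (j : ℤ) = (i : ℤ) + 1 <;> simp [h, eq_comm]
    · intro b _ hb
      simp [Pi.single_eq_of_ne hb]
    · simp
  · intro a _ ha
    simp [Pi.single_eq_of_ne ha]
  · simp

/-- In the Witt algebra over a field of characteristic `p ≥ 5`, the elements `e₋₁` and
`e_{p-2}` generate `W` as a Lie algebra: every Lie subalgebra (subspace closed under the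
bracket) containing them is all of `W`. -/
theorem witt_generated_by_two_elements (p : ℕ) [Fact p.Prime] (hp : 5 ≤ p)
    (k : Type*) [Field k] [CharP k p] :
    ∀ S : Submodule k (Fin p → k),
      wittE p k (-1) ∈ S → wittE p k ((p : ℤ) - 2) ∈ S →
      (∀ x y : Fin p → k, x ∈ S → y ∈ S → wittBracket p k x y ∈ S) →
      S = ⊤ := by
  intro S h1 h2 hbr
  have hppos : 0 < p := by omega
  haveI : NeZero p := ⟨by omega⟩
  -- e_{-1} = Pi.single 0 1
  have he0 : wittE p k (-1) = Pi.single (0 : Fin p) 1 := by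
    funext i
    simp only [wittE, Pi.single_apply]
    by_cases h : i = 0
    · subst h; simp
    · have : (i : ℤ) ≠ 0 := by
        have := Fin.val_ne_of_ne h
        simp only [Fin.val_zero] at this
        exact_mod_cast this
      simp [h, this]
  have h0 : Pi.single (0 : Fin p) 1 ∈ S := he0 ▸ h1
  -- downward induction
  have key : ∀ m : ℕ, m < p → Pi.single (⟨p - 1 - m, by omega⟩ : Fin p) (1 : k) ∈ S := by
    intro m
    induction m with
    | zero =>
      intro _
      simp only [Nat.sub_zero]
      have : wittE p k ((p : ℤ) - 2) = Pi.single (⟨p - 1, by omega⟩ : Fin p) (1 : k) := by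
        funext i
        simp only [wittE, Pi.single_apply]
        by_cases h : i = (⟨p - 1, by omega⟩ : Fin p)
        · subst h
          have : ((p - 1 : ℕ) : ℤ) = (p : ℤ) - 2 + 1 := by omega
          simp [this]
        · have hiv : (i : ℕ) ≠ p - 1 := fun hc => h (Fin.ext hc)
          have hne : ((i : ℕ) : ℤ) ≠ (p : ℤ) - 2 + 1 := by omega
          simp [h, hne]
      exact this ▸ h2
    | succ m ih =>
      intro hm
      have hmem := ih (by omega)
      set j : Fin p := ⟨p - 1 - m, by omega⟩ with hj
      have hbm := hbr _ _ h0 hmem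
      rw [witt_brk] at hbm
      have hjval : ((j : ℤ)) = ((p - 1 - m : ℕ) : ℤ) := rfl
      have heq : (fun i : Fin p => if (i : ℤ) + 1 = (j : ℤ) then ((j : ℤ) : k) else 0)
          = ((j : ℤ) : k) • (Pi.single (⟨p - 1 - (m + 1), by omega⟩ : Fin p) (1 : k) : Fin p → k) := by
        funext i
        simp only [Pi.smul_apply, Pi.single_apply, smul_eq_mul]
        by_cases h : i = (⟨p - 1 - (m + 1), by omega⟩ : Fin p)
        · subst h
          have : ((p - 1 - (m + 1) : ℕ) : ℤ) + 1 = ((p - 1 - m : ℕ) : ℤ) := by omega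
          simp [hjval, this]
        · have hne : (i : ℤ) + 1 ≠ (j : ℤ) := by
            intro hc
            apply h
            rw [hjval] at hc
            have : (i : ℕ) = p - 1 - (m + 1) := by omega
            exact Fin.ext this
          simp [h, hne]
      rw [heq] at hbm
      have hjne : ((j : ℤ) : k) ≠ 0 := by
        rw [hjval]
        push_cast
        rw [Ne, CharP.cast_eq_zero_iff k p]
        intro hdvd
        have := Nat.le_of_dvd (by omega) hdvd
        omega
      have := S.smul_mem (((j : ℤ) : k))⁻¹ hbm
      rwa [smul_smul, inv_mul_cancel₀ hjne, one_smul] at this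
  have hall : ∀ i : Fin p, Pi.single i (1 : k) ∈ S := by
    intro i
    have hi := i.isLt
    have := key (p - 1 - i) (by omega)
    have hieq : (⟨p - 1 - (p - 1 - (i : ℕ)), by omega⟩ : Fin p) = i := by
      apply Fin.ext; simp; omega
    rwa [hieq] at this
  rw [eq_top_iff]
  intro x _
  have : x = ∑ i : Fin p, x i • (Pi.single i (1 : k) : Fin p → k) := by
    funext j
    simp [Pi.single_apply, Finset.sum_ite_eq', mul_comm]
  rw [this]
  exact Submodule.sum_mem S fun i _ => S.smul_mem _ (hall i)
end
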